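/- Let f: ℝ → ℝ be twice continuously differentiable with f(0) = 0, and let g(t) := f(t)/t (extended continuously by f'(0) at t = 0), assumed continuously differentiable on ℝ. Fix t < 0, constants c > 0 and μ ∈ (0,1), and set τ_h := c(1−μ)^h t for h ≥ 0. Then for any positive integer H, Σ_{h=0}^{H−1} f(τ_h) ≤ (1/μ)[ ∫_{c(1−μ)^H t}^{c t} g(τ) dτ + (μ/(2−μ)) · h₁(ct) ], where h₁(s) := (max_{τ ∈ [s,0]} |g'(τ)|) · s²/2. -/

import Mathlib

/-- Lemma on geometric sums of `f(τ_h)`: for `f ∈ C²` with `f(0) = 0`,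
`g(t) = f(t)/t` (extended by `f'(0)` at `0`) assumed `C¹`, `t < 0`, `c > 0`,
`μ ∈ (0,1)` and `τ_h = c(1−μ)^h t`, one has for every `H ≥ 1`
`∑_{h<H} f(τ_h) ≤ (1/μ)[∫_{c(1−μ)^H t}^{c t} g + (μ/(2−μ)) h₁(ct)]`, where
`h₁(s) = (max_{τ∈[s,0]} |g'(τ)|) s²/2`. -/
theorem geometric_taylor_sum_bound
    (f g : ℝ → ℝ)
    (hf : ContDiff ℝ 2 f) (hf0 : f 0 = 0)
    (hg : ∀ t : ℝ, t ≠ 0 → g t = f t / t) (hg0 : g 0 = deriv f 0)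
    (hgC1 : ContDiff ℝ 1 g)
    (t : ℝ) (ht : t < 0) (c : ℝ) (hc : 0 < c)
    (μ : ℝ) (hμ : μ ∈ Set.Ioo (0 : ℝ) 1) :
    ∀ H : ℕ, 1 ≤ H →
      ∑ h ∈ Finset.range H, f (c * (1 - μ) ^ h * t) ≤
        (1 / μ) * ((∫ τ in (c * (1 - μ) ^ H * t)..(c * t), g τ) +
          (μ / (2 - μ)) *
            ((sSup ((fun τ => |deriv g τ|) '' Set.Icc (c * t) 0)) *
              (c * t) ^ 2 / 2)) := by
  intro H hH
  obtain ⟨hμ0, hμ1⟩ := hμ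
  set M := sSup ((fun τ => |deriv g τ|) '' Set.Icc (c * t) 0) with hMdef
  set τ : ℕ → ℝ := fun h => c * (1 - μ) ^ h * t with hτdef
  have hgc : Continuous g := hgC1.continuous
  have hg'c : Continuous (deriv g) := hgC1.continuous_deriv le_rfl
  have hct : c * t < 0 := mul_neg_of_pos_of_neg hc ht
  have hr0 : (0:ℝ) < 1 - μ := by linarith
  have hτneg : ∀ h, τ h < 0 := fun h =>
    mul_neg_of_pos_of_neg (mul_pos hc (pow_pos hr0 h)) ht
  have hτmem : ∀ h, τ h ∈ Set.Icc (c*t) 0 := by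
    intro h
    refine ⟨?_, (hτneg h).le⟩
    have h1 : (1-μ)^h ≤ 1 := pow_le_one₀ hr0.le (by linarith)
    have := pow_pos hr0 h
    show c * t ≤ c * (1-μ)^h * t
    nlinarith
  have hMb : ∀ x ∈ Set.Icc (c*t) 0, |deriv g x| ≤ M := by
    intro x hx
    exact le_csSup ((isCompact_Icc.image (hg'c.abs)).bddAbove)
      (Set.mem_image_of_mem _ hx)
  have hM0 : 0 ≤ M := le_trans (abs_nonneg _) (hMb (c*t) ⟨le_refl _, hct.le⟩)
  have hlip : ∀ x ∈ Set.Icc (c*t) 0, ∀ y ∈ Set.Icc (c*t) 0,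
      |g y - g x| ≤ M * |y - x| := by
    intro x hx y hy
    have := (convex_Icc (c*t) 0).norm_image_sub_le_of_norm_deriv_le
      (f := g) (fun z _ => hgC1.differentiable one_ne_zero z)
      (fun z hz => by simpa using hMb z hz) hx hy
    simpa [Real.norm_eq_abs] using this
  -- step relations
  have hstep : ∀ h, τ (h+1) - τ h = -μ * τ h := by
    intro h
    show c * (1-μ)^(h+1) * t - c * (1-μ)^h * t = -μ * (c * (1-μ)^h * t)
    ring
  have hle : ∀ h, τ h ≤ τ (h+1) := by
    intro h
    have := hstep h
    nlinarith [hτneg h]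
  have hint : ∀ (a b : ℝ), IntervalIntegrable g MeasureTheory.volume a b :=
    fun a b => (hgc.intervalIntegrable a b)
  -- per-step bound
  have key : ∀ h, μ * f (τ h) ≤
      -(∫ x in τ h..τ (h+1), g x) + M * μ^2 * (τ h)^2 / 2 := by
    intro h
    have hne : τ h ≠ 0 := (hτneg h).ne
    have hfτ : f (τ h) = τ h * g (τ h) := by
      rw [hg (τ h) hne]; field_simp
    have hsub : Set.Icc (τ h) (τ (h+1)) ⊆ Set.Icc (c*t) 0 :=
      Set.Icc_subset_Icc (hτmem h).1 (hτmem (h+1)).2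
    have hEle : (∫ x in τ h..τ (h+1), (g x - g (τ h))) ≤
        ∫ x in τ h..τ (h+1), M * (x - τ h) := by
      apply intervalIntegral.integral_mono_on (hle h)
      · exact (hgc.sub continuous_const).intervalIntegrable _ _
      · exact ((continuous_const.mul (continuous_id.sub continuous_const)).intervalIntegrable _ _)
      · intro x hx
        have hx' : x ∈ Set.Icc (c*t) 0 := hsub hx
        have := hlip (τ h) (hτmem h) x hx'
        have habs : |x - τ h| = x - τ h := abs_of_nonneg (by linarith [hx.1])
        calc g x - g (τ h) ≤ |g x - g (τ h)| := le_abs_self _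
          _ ≤ M * |x - τ h| := this
          _ = M * (x - τ h) := by rw [habs]
    have hE2 : (∫ x in τ h..τ (h+1), M * (x - τ h)) =
        M * (τ (h+1) - τ h)^2 / 2 := by
      have hid : (∫ x in τ h..τ (h+1), (x - τ h)) =
          (τ (h+1) - τ h)^2 / 2 := by
        rw [intervalIntegral.integral_sub (continuous_id'.intervalIntegrable _ _)
          intervalIntegrable_const, integral_id,
          intervalIntegral.integral_const, smul_eq_mul]
        ring
      rw [intervalIntegral.integral_const_mul, hid, mul_div_assoc]
    have hE1 : (∫ x in τ h..τ (h+1), (g x - g (τ h))) =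
        (∫ x in τ h..τ (h+1), g x) - (τ (h+1) - τ h) * g (τ h) := by
      rw [intervalIntegral.integral_sub (hint _ _) intervalIntegrable_const,
        intervalIntegral.integral_const, smul_eq_mul]
    have hsq : (τ (h+1) - τ h)^2 = μ^2 * (τ h)^2 := by
      rw [hstep h]; ring
    have := hEle
    rw [hE1, hE2, hsq] at this
    have hlin : μ * f (τ h) = -(τ (h+1) - τ h) * g (τ h) := by
      rw [hfτ, hstep h]; ring
    linarith
  -- sum the per-step bounds
  have hsum1 : μ * (∑ h ∈ Finset.range H, f (τ h)) ≤
      ∑ h ∈ Finset.range H,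
        (-(∫ x in τ h..τ (h+1), g x) + M * μ^2 * (τ h)^2 / 2) := by
    rw [Finset.mul_sum]
    exact Finset.sum_le_sum fun h _ => key h
  have htel : ∑ h ∈ Finset.range H, (∫ x in τ h..τ (h+1), g x) =
      ∫ x in (τ 0)..(τ H), g x :=
    intervalIntegral.sum_integral_adjacent_intervals (fun k _ => hint _ _)
  have hsum2 : ∑ h ∈ Finset.range H,
      (-(∫ x in τ h..τ (h+1), g x) + M * μ^2 * (τ h)^2 / 2) =
      -(∫ x in (τ 0)..(τ H), g x) +
        (M * μ^2 / 2) * ∑ h ∈ Finset.range H, (τ h)^2 := by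
    rw [Finset.sum_add_distrib, Finset.sum_neg_distrib, htel, Finset.mul_sum]
    congr 1
    apply Finset.sum_congr rfl
    intro h _
    ring
  -- geometric sum bound
  have hτsq : ∀ h, (τ h)^2 = (c*t)^2 * ((1-μ)^2)^h := by
    intro h
    show (c * (1-μ)^h * t)^2 = (c*t)^2 * ((1-μ)^2)^h
    have : ((1-μ)^h)^2 = ((1-μ)^2)^h := by
      rw [← pow_mul, ← pow_mul, Nat.mul_comm]
    calc (c * (1-μ)^h * t)^2 = (c*t)^2 * ((1-μ)^h)^2 := by ring
      _ = (c*t)^2 * ((1-μ)^2)^h := by rw [this]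
  have hr1 : (1-μ)^2 < 1 := by nlinarith
  have hrpos : (0:ℝ) < 1 - (1-μ)^2 := by linarith
  have hdenpos : (0:ℝ) < μ * (2 - μ) := mul_pos hμ0 (by linarith)
  have hgeo : ∑ h ∈ Finset.range H, ((1-μ)^2)^h ≤ 1 / (μ * (2 - μ)) := by
    have hmul := geom_sum_mul ((1-μ)^2 : ℝ) H
    have hpH : (0:ℝ) ≤ ((1-μ)^2)^H := pow_nonneg (by positivity) H
    rw [le_div_iff₀ hdenpos]
    have : (∑ h ∈ Finset.range H, ((1-μ)^2)^h) * (μ * (2 - μ)) =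
        1 - ((1-μ)^2)^H := by linear_combination -hmul
    linarith
  have hsumsq : ∑ h ∈ Finset.range H, (τ h)^2 ≤ (c*t)^2 / (μ * (2-μ)) := by
    calc ∑ h ∈ Finset.range H, (τ h)^2
        = (c*t)^2 * ∑ h ∈ Finset.range H, ((1-μ)^2)^h := by
          rw [Finset.mul_sum]; exact Finset.sum_congr rfl fun h _ => hτsq h
      _ ≤ (c*t)^2 * (1 / (μ * (2-μ))) := by
          apply mul_le_mul_of_nonneg_left hgeo (by positivity)
      _ = (c*t)^2 / (μ * (2-μ)) := by ring
  -- combine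
  have hτ0 : τ 0 = c * t := by show c * (1-μ)^0 * t = c * t; ring
  have hsym : -(∫ x in (τ 0)..(τ H), g x) = ∫ x in τ H..τ 0, g x :=
    (intervalIntegral.integral_symm (τ 0) (τ H)).symm
  have hmain : μ * (∑ h ∈ Finset.range H, f (τ h)) ≤
      (∫ x in τ H..τ 0, g x) + (μ / (2-μ)) * (M * (c*t)^2 / 2) := by
    have h2 : (M * μ^2 / 2) * ∑ h ∈ Finset.range H, (τ h)^2 ≤
        (M * μ^2 / 2) * ((c*t)^2 / (μ * (2-μ))) :=
      mul_le_mul_of_nonneg_left hsumsq (by positivity)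
    have heq : (M * μ^2 / 2) * ((c*t)^2 / (μ * (2-μ))) =
        (μ / (2-μ)) * (M * (c*t)^2 / 2) := by
      have h2μ : (2:ℝ) - μ ≠ 0 := by linarith
      field_simp
    calc μ * (∑ h ∈ Finset.range H, f (τ h))
        ≤ -(∫ x in (τ 0)..(τ H), g x) +
          (M * μ^2 / 2) * ∑ h ∈ Finset.range H, (τ h)^2 := by
            rw [← hsum2]; exact hsum1
      _ ≤ (∫ x in τ H..τ 0, g x) + (μ / (2-μ)) * (M * (c*t)^2 / 2) := by
            rw [← hsym, ← heq]; linarith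
  rw [div_mul_eq_mul_div, one_mul, le_div_iff₀ hμ0, mul_comm]
  simpa [hτdef] using hmain
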